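/- Suppose 𝒟 is neighborhood closed, Φ is 𝒟-pullback asymptotically compact in X, and Φ has a closed measurable (with respect to the P-completion of F₂) 𝒟-pullback absorbing set K ∈ 𝒟. Then Φ has a 𝒟-pullback attractor A ∈ 𝒟, this attractor is unique in 𝒟, and for every ω₁ ∈ Ω₁ and ω₂ ∈ Ω₂ it is given by A(ω₁,ω₂) = Ω(K,ω₁,ω₂) = ∪_{B∈𝒟} Ω(B,ω₁,ω₂). -/

import Mathlib

open Set Metric MeasureTheory Filter Topology

section RDS

variable {X : Type*} [MetricSpace X] [MeasurableSpace X] [BorelSpace X]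
variable {Ω₁ : Type*} {Ω₂ : Type*} [MeasurableSpace Ω₂]

/-- `(Ω₁, θ₁)` is a parametric dynamical system. -/
def IsParamDS₁ (θ₁ : ℝ → Ω₁ → Ω₁) : Prop :=
  θ₁ 0 = id ∧ ∀ s t : ℝ, θ₁ (s + t) = θ₁ t ∘ θ₁ s

/-- `(Ω₂, F₂, P, θ₂)` is a measure-preserving parametric dynamical system. -/
def IsParamDS₂ (P : Measure Ω₂) (θ₂ : ℝ → Ω₂ → Ω₂) : Prop :=
  Measurable (fun p : ℝ × Ω₂ => θ₂ p.1 p.2) ∧ θ₂ 0 = id ∧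
    (∀ s t : ℝ, θ₂ (s + t) = θ₂ t ∘ θ₂ s) ∧ ∀ t : ℝ, MeasurePreserving (θ₂ t) P P

/-- `Φ` is a continuous cocycle on `X` over the two parametric dynamical systems. -/
def IsCocycle (θ₁ : ℝ → Ω₁ → Ω₁) (θ₂ : ℝ → Ω₂ → Ω₂)
    (Φ : ℝ → Ω₁ → Ω₂ → X → X) : Prop :=
  (∀ ω₁ : Ω₁, Measurable fun p : Ici (0:ℝ) × Ω₂ × X => Φ (p.1 : ℝ) ω₁ p.2.1 p.2.2) ∧
  (∀ ω₁ ω₂, Φ 0 ω₁ ω₂ = id) ∧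
  (∀ t τ : ℝ, 0 ≤ t → 0 ≤ τ → ∀ ω₁ ω₂,
      Φ (t + τ) ω₁ ω₂ = (Φ t (θ₁ τ ω₁) (θ₂ τ ω₂)) ∘ (Φ τ ω₁ ω₂)) ∧
  (∀ t : ℝ, 0 ≤ t → ∀ ω₁ ω₂, Continuous (Φ t ω₁ ω₂))

/-- The pullback image `Φ(t, θ₁(-t)ω₁, θ₂(-t)ω₂, B(θ₁(-t)ω₁, θ₂(-t)ω₂))`. -/
def pbImage (θ₁ : ℝ → Ω₁ → Ω₁) (θ₂ : ℝ → Ω₂ → Ω₂) (Φ : ℝ → Ω₁ → Ω₂ → X → X)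
    (B : Ω₁ → Ω₂ → Set X) (t : ℝ) (ω₁ : Ω₁) (ω₂ : Ω₂) : Set X :=
  Φ t (θ₁ (-t) ω₁) (θ₂ (-t) ω₂) '' B (θ₁ (-t) ω₁) (θ₂ (-t) ω₂)

/-- The collection `𝒟` is neighborhood closed. -/
def NbhdClosed (𝒟 : Set (Ω₁ → Ω₂ → Set X)) : Prop :=
  ∀ D ∈ 𝒟, ∃ ε > (0:ℝ), ∀ B : Ω₁ → Ω₂ → Set X,
    (∀ ω₁ ω₂, (B ω₁ ω₂).Nonempty ∧ B ω₁ ω₂ ⊆ thickening ε (D ω₁ ω₂)) → B ∈ 𝒟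

/-- `K` is a `𝒟`-pullback absorbing set for `Φ`. -/
def AbsorbsFam (θ₁ : ℝ → Ω₁ → Ω₁) (θ₂ : ℝ → Ω₂ → Ω₂) (Φ : ℝ → Ω₁ → Ω₂ → X → X)
    (𝒟 : Set (Ω₁ → Ω₂ → Set X)) (K : Ω₁ → Ω₂ → Set X) : Prop :=
  ∀ ω₁ ω₂, ∀ B ∈ 𝒟, ∃ T > (0:ℝ), ∀ t ≥ T, pbImage θ₁ θ₂ Φ B t ω₁ ω₂ ⊆ K ω₁ ω₂

/-- `K` is measurable with respect to the `P`-completion of the σ-algebra of `Ω₂`. -/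
def MeasurableFam (P : Measure Ω₂) (K : Ω₁ → Ω₂ → Set X) : Prop :=
  ∀ (x : X) (ω₁ : Ω₁), NullMeasurable (fun ω₂ => infDist x (K ω₁ ω₂)) P

/-- `Φ` is `𝒟`-pullback asymptotically compact in `X`. -/
def AsympCompact (θ₁ : ℝ → Ω₁ → Ω₁) (θ₂ : ℝ → Ω₂ → Ω₂) (Φ : ℝ → Ω₁ → Ω₂ → X → X)
    (𝒟 : Set (Ω₁ → Ω₂ → Set X)) : Prop :=
  ∀ ω₁ ω₂, ∀ B ∈ 𝒟, ∀ (t : ℕ → ℝ) (x : ℕ → X),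
    Tendsto t atTop atTop →
    (∀ n, x n ∈ B (θ₁ (-(t n)) ω₁) (θ₂ (-(t n)) ω₂)) →
    ∃ (φ : ℕ → ℕ) (y : X), StrictMono φ ∧
      Tendsto (fun n => Φ (t (φ n)) (θ₁ (-(t (φ n))) ω₁) (θ₂ (-(t (φ n))) ω₂) (x (φ n)))
        atTop (𝓝 y)

/-- `A` pullback attracts every member of `𝒟` (Hausdorff semidistance goes to `0`). -/
def AttractsFam (θ₁ : ℝ → Ω₁ → Ω₁) (θ₂ : ℝ → Ω₂ → Ω₂) (Φ : ℝ → Ω₁ → Ω₂ → X → X)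
    (𝒟 : Set (Ω₁ → Ω₂ → Set X)) (A : Ω₁ → Ω₂ → Set X) : Prop :=
  ∀ ω₁ ω₂, ∀ B ∈ 𝒟, ∀ ε > (0:ℝ), ∃ T : ℝ, ∀ t ≥ T,
    pbImage θ₁ θ₂ Φ B t ω₁ ω₂ ⊆ thickening ε (A ω₁ ω₂)

/-- `A` is a `𝒟`-pullback attractor for `Φ`. -/
def IsPullbackAttractor (P : Measure Ω₂) (θ₁ : ℝ → Ω₁ → Ω₁) (θ₂ : ℝ → Ω₂ → Ω₂)
    (Φ : ℝ → Ω₁ → Ω₂ → X → X) (𝒟 : Set (Ω₁ → Ω₂ → Set X)) (A : Ω₁ → Ω₂ → Set X) : Prop :=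
  A ∈ 𝒟 ∧ MeasurableFam P A ∧
  (∀ ω₁ ω₂, IsCompact (A ω₁ ω₂)) ∧
  (∀ t : ℝ, 0 ≤ t → ∀ ω₁ ω₂, Φ t ω₁ ω₂ '' A ω₁ ω₂ = A (θ₁ t ω₁) (θ₂ t ω₂)) ∧
  AttractsFam θ₁ θ₂ Φ 𝒟 A

/-- The Ω-limit set of a family `B`. -/
def omegaLimitFam (θ₁ : ℝ → Ω₁ → Ω₁) (θ₂ : ℝ → Ω₂ → Ω₂) (Φ : ℝ → Ω₁ → Ω₂ → X → X)
    (B : Ω₁ → Ω₂ → Set X) (ω₁ : Ω₁) (ω₂ : Ω₂) : Set X :=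
  ⋂ τ ∈ Ici (0:ℝ), closure (⋃ t ∈ Ici τ, pbImage θ₁ θ₂ Φ B t ω₁ ω₂)

section Aux1

variable {X : Type*} [MetricSpace X] [MeasurableSpace X] [BorelSpace X]
variable {Ω₁ : Type*} {Ω₂ : Type*} [MeasurableSpace Ω₂] {P : Measure Ω₂}
variable {θ₁ : ℝ → Ω₁ → Ω₁} {θ₂ : ℝ → Ω₂ → Ω₂} {Φ : ℝ → Ω₁ → Ω₂ → X → X}
variable {𝒟 : Set (Ω₁ → Ω₂ → Set X)} {K B : Ω₁ → Ω₂ → Set X}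

lemma theta1_comp (hθ₁ : IsParamDS₁ θ₁) (s t : ℝ) (ω : Ω₁) :
    θ₁ t (θ₁ s ω) = θ₁ (s + t) ω := by
  rw [hθ₁.2 s t]; rfl

lemma theta2_comp (hθ₂ : IsParamDS₂ P θ₂) (s t : ℝ) (ω : Ω₂) :
    θ₂ t (θ₂ s ω) = θ₂ (s + t) ω := by
  rw [hθ₂.2.2.1 s t]; rfl

/-- Splitting of the pullback image under the cocycle property. -/
lemma pb_split (hθ₁ : IsParamDS₁ θ₁) (hθ₂ : IsParamDS₂ P θ₂) (hΦ : IsCocycle θ₁ θ₂ Φ)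
    {τ s : ℝ} (hτ : 0 ≤ τ) (hs : 0 ≤ s) (B : Ω₁ → Ω₂ → Set X) (ω₁ : Ω₁) (ω₂ : Ω₂) :
    pbImage θ₁ θ₂ Φ B (τ + s) ω₁ ω₂ =
      Φ τ (θ₁ (-τ) ω₁) (θ₂ (-τ) ω₂) ''
        pbImage θ₁ θ₂ Φ B s (θ₁ (-τ) ω₁) (θ₂ (-τ) ω₂) := by
  have h1 : θ₁ (-s) (θ₁ (-τ) ω₁) = θ₁ (-(τ + s)) ω₁ := by
    rw [theta1_comp hθ₁]; ring_nf
  have h2 : θ₂ (-s) (θ₂ (-τ) ω₂) = θ₂ (-(τ + s)) ω₂ := by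
    rw [theta2_comp hθ₂]; ring_nf
  have hcoc := hΦ.2.2.1 τ s hτ hs (θ₁ (-(τ + s)) ω₁) (θ₂ (-(τ + s)) ω₂)
  have h3 : θ₁ s (θ₁ (-(τ + s)) ω₁) = θ₁ (-τ) ω₁ := by
    rw [theta1_comp hθ₁]; ring_nf
  have h4 : θ₂ s (θ₂ (-(τ + s)) ω₂) = θ₂ (-τ) ω₂ := by
    rw [theta2_comp hθ₂]; ring_nf
  rw [h3, h4] at hcoc
  simp only [pbImage, h1, h2, Set.image_image]
  rw [hcoc]
  rfl

set_option linter.unusedSectionVars false in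
/-- Sequence characterization of membership in the Ω-limit set. -/
lemma mem_omegaLimitFam_iff {ω₁ : Ω₁} {ω₂ : Ω₂} {y : X} :
    y ∈ omegaLimitFam θ₁ θ₂ Φ B ω₁ ω₂ ↔
      ∃ (t : ℕ → ℝ) (x : ℕ → X), Tendsto t atTop atTop ∧ (∀ n, 0 ≤ t n) ∧
        (∀ n, x n ∈ pbImage θ₁ θ₂ Φ B (t n) ω₁ ω₂) ∧ Tendsto x atTop (𝓝 y) := by
  constructor
  · intro hy
    have h : ∀ n : ℕ, ∃ z, (∃ s : ℝ, s ∈ Ici (n : ℝ) ∧ z ∈ pbImage θ₁ θ₂ Φ B s ω₁ ω₂) ∧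
        dist y z < 1 / (n + 1) := by
      intro n
      have hyn : y ∈ closure (⋃ t ∈ Ici (n : ℝ), pbImage θ₁ θ₂ Φ B t ω₁ ω₂) := by
        have := Set.mem_iInter₂.1 hy (n : ℝ) (Set.mem_Ici.2 (Nat.cast_nonneg n))
        exact this
      have hpos : (0 : ℝ) < 1 / (n + 1) := by positivity
      obtain ⟨z, hz, hdz⟩ := Metric.mem_closure_iff.1 hyn _ hpos
      simp only [Set.mem_iUnion] at hz
      obtain ⟨s, hs, hzs⟩ := hz
      exact ⟨z, ⟨s, hs, hzs⟩, hdz⟩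
    choose z hz hdz using h
    choose t ht htz using hz
    refine ⟨t, z, ?_, ?_, htz, ?_⟩
    · exact tendsto_atTop_mono (fun n => ht n) tendsto_natCast_atTop_atTop
    · intro n; exact le_trans (Nat.cast_nonneg n) (ht n)
    · rw [tendsto_iff_dist_tendsto_zero]
      refine squeeze_zero (fun n => dist_nonneg) (fun n => (dist_comm (z n) y ▸ (hdz n).le)) ?_
      exact tendsto_one_div_add_atTop_nhds_zero_nat
  · rintro ⟨t, x, htt, ht0, hx, hxy⟩
    refine Set.mem_iInter₂.2 fun τ hτ => ?_
    refine mem_closure_of_tendsto hxy ?_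
    filter_upwards [htt.eventually_ge_atTop τ] with n hn
    exact Set.mem_biUnion hn (hx n)
/-- The Ω-limit set of any `B ∈ 𝒟` is contained in the Ω-limit set of the absorbing set. -/
lemma omega_subset_omegaK (hθ₁ : IsParamDS₁ θ₁) (hθ₂ : IsParamDS₂ P θ₂)
    (hΦ : IsCocycle θ₁ θ₂ Φ) (hKabs : AbsorbsFam θ₁ θ₂ Φ 𝒟 K)
    (hB : B ∈ 𝒟) (ω₁ : Ω₁) (ω₂ : Ω₂) :
    omegaLimitFam θ₁ θ₂ Φ B ω₁ ω₂ ⊆ omegaLimitFam θ₁ θ₂ Φ K ω₁ ω₂ := by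
  intro y hy
  obtain ⟨t, x, htt, ht0, hx, hxy⟩ := mem_omegaLimitFam_iff.1 hy
  refine Set.mem_iInter₂.2 fun τ hτ => ?_
  rw [Set.mem_Ici] at hτ
  obtain ⟨T, hT0, habs⟩ := hKabs (θ₁ (-τ) ω₁) (θ₂ (-τ) ω₂) B hB
  refine mem_closure_of_tendsto hxy ?_
  filter_upwards [htt.eventually_ge_atTop (τ + T)] with n hn
  have hsub : pbImage θ₁ θ₂ Φ B (t n) ω₁ ω₂ ⊆ pbImage θ₁ θ₂ Φ K τ ω₁ ω₂ := by
    have hdec : t n = τ + (t n - τ) := by ring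
    rw [hdec, pb_split hθ₁ hθ₂ hΦ hτ (by linarith) B ω₁ ω₂]
    refine Set.image_mono ?_
    exact habs (t n - τ) (by linarith)
  exact Set.mem_biUnion Set.self_mem_Ici (hsub (hx n))

/-- The Ω-limit set of the absorbing set is contained in the absorbing set. -/
lemma omegaK_subset_K (hK𝒟 : K ∈ 𝒟)
    (hKcl : ∀ ω₁ ω₂, (K ω₁ ω₂).Nonempty ∧ IsClosed (K ω₁ ω₂))
    (hKabs : AbsorbsFam θ₁ θ₂ Φ 𝒟 K) (ω₁ : Ω₁) (ω₂ : Ω₂) :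
    omegaLimitFam θ₁ θ₂ Φ K ω₁ ω₂ ⊆ K ω₁ ω₂ := by
  obtain ⟨T, hT0, habs⟩ := hKabs ω₁ ω₂ K hK𝒟
  intro y hy
  have h1 : y ∈ closure (⋃ t ∈ Ici T, pbImage θ₁ θ₂ Φ K t ω₁ ω₂) :=
    Set.mem_iInter₂.1 hy T (le_of_lt hT0)
  have h2 : (⋃ t ∈ Ici T, pbImage θ₁ θ₂ Φ K t ω₁ ω₂) ⊆ K ω₁ ω₂ := by
    refine Set.iUnion₂_subset fun t ht => habs t ht
  have := (closure_mono h2) h1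
  rwa [(hKcl ω₁ ω₂).2.closure_eq] at this

lemma omegaLimitFam_isClosed (ω₁ : Ω₁) (ω₂ : Ω₂) :
    IsClosed (omegaLimitFam θ₁ θ₂ Φ B ω₁ ω₂) :=
  isClosed_biInter fun _ _ => isClosed_closure

/-- The Ω-limit set of the absorbing set is nonempty. -/
lemma omegaK_nonempty (hac : AsympCompact θ₁ θ₂ Φ 𝒟) (hK𝒟 : K ∈ 𝒟)
    (hKne : ∀ ω₁ ω₂, (K ω₁ ω₂).Nonempty) (ω₁ : Ω₁) (ω₂ : Ω₂) :
    (omegaLimitFam θ₁ θ₂ Φ K ω₁ ω₂).Nonempty := by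
  have hz : ∀ n : ℕ, ∃ z, z ∈ K (θ₁ (-((n : ℝ))) ω₁) (θ₂ (-((n : ℝ))) ω₂) :=
    fun n => hKne _ _
  choose z hzmem using hz
  obtain ⟨φ, y, hφ, hy⟩ := hac ω₁ ω₂ K hK𝒟 (fun n => (n : ℝ)) z
    tendsto_natCast_atTop_atTop hzmem
  refine ⟨y, mem_omegaLimitFam_iff.2 ⟨fun n => ((φ n : ℕ) : ℝ), _, ?_, ?_, ?_, hy⟩⟩
  · exact tendsto_natCast_atTop_atTop.comp hφ.tendsto_atTop
  · intro n; exact Nat.cast_nonneg _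
  · intro n; exact Set.mem_image_of_mem _ (hzmem (φ n))

/-- The Ω-limit set of the absorbing set is compact. -/
lemma omegaK_isCompact (hac : AsympCompact θ₁ θ₂ Φ 𝒟) (hK𝒟 : K ∈ 𝒟)
    (ω₁ : Ω₁) (ω₂ : Ω₂) : IsCompact (omegaLimitFam θ₁ θ₂ Φ K ω₁ ω₂) := by
  set A := omegaLimitFam θ₁ θ₂ Φ K ω₁ ω₂ with hA
  refine IsSeqCompact.isCompact ?_
  intro y hy
  have h : ∀ k : ℕ, ∃ w, (∃ s : ℝ, s ∈ Ici (k : ℝ) ∧ w ∈ pbImage θ₁ θ₂ Φ K s ω₁ ω₂) ∧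
      dist (y k) w < 1 / (k + 1) := by
    intro k
    have hyk : y k ∈ closure (⋃ t ∈ Ici (k : ℝ), pbImage θ₁ θ₂ Φ K t ω₁ ω₂) :=
      Set.mem_iInter₂.1 (hy k) (k : ℝ) (Set.mem_Ici.2 (Nat.cast_nonneg k))
    obtain ⟨w, hw, hdw⟩ := Metric.mem_closure_iff.1 hyk (1 / ((k:ℝ) + 1)) (by positivity)
    simp only [Set.mem_iUnion] at hw
    obtain ⟨s, hs, hws⟩ := hw
    exact ⟨w, ⟨s, hs, hws⟩, hdw⟩
  choose w hw hdw using h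
  choose s hs hws using hw
  choose z hzmem hzw using hws
  obtain ⟨φ, ylim, hφ, hylim⟩ := hac ω₁ ω₂ K hK𝒟 s z
    (tendsto_atTop_mono (fun k => hs k) tendsto_natCast_atTop_atTop) hzmem
  have hwlim : Tendsto (fun n => w (φ n)) atTop (𝓝 ylim) := by
    refine hylim.congr fun n => ?_
    exact hzw (φ n)
  have hylim : Tendsto (fun n => y (φ n)) atTop (𝓝 ylim) := by
    rw [tendsto_iff_dist_tendsto_zero]
    have h1 : Tendsto (fun n => dist (y (φ n)) (w (φ n)) + dist (w (φ n)) ylim) atTop (𝓝 0) := by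
      have ha : Tendsto (fun n => dist (y (φ n)) (w (φ n))) atTop (𝓝 0) := by
        refine squeeze_zero (fun n => dist_nonneg) (fun n => (hdw (φ n)).le) ?_
        exact tendsto_one_div_add_atTop_nhds_zero_nat.comp hφ.tendsto_atTop
      have hb : Tendsto (fun n => dist (w (φ n)) ylim) atTop (𝓝 0) :=
        tendsto_iff_dist_tendsto_zero.1 hwlim
      simpa using ha.add hb
    exact squeeze_zero (fun n => dist_nonneg) (fun n => dist_triangle _ _ _) h1
  have hylimA : ylim ∈ A := (omegaLimitFam_isClosed ω₁ ω₂).mem_of_tendsto hylim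
    (Filter.Eventually.of_forall fun n => hy (φ n))
  exact ⟨ylim, hylimA, φ, hφ, hylim⟩
/-- Invariance of the Ω-limit set of the absorbing set. -/
lemma omegaK_invariant (hθ₁ : IsParamDS₁ θ₁) (hθ₂ : IsParamDS₂ P θ₂)
    (hΦ : IsCocycle θ₁ θ₂ Φ) (hac : AsympCompact θ₁ θ₂ Φ 𝒟) (hK𝒟 : K ∈ 𝒟) :
    ∀ t : ℝ, 0 ≤ t → ∀ ω₁ ω₂, Φ t ω₁ ω₂ '' omegaLimitFam θ₁ θ₂ Φ K ω₁ ω₂ =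
      omegaLimitFam θ₁ θ₂ Φ K (θ₁ t ω₁) (θ₂ t ω₂) := by
  intro t ht ω₁ ω₂
  have hbase1 : θ₁ (-t) (θ₁ t ω₁) = ω₁ := by
    rw [theta1_comp hθ₁]; simp [hθ₁.1]
  have hbase2 : θ₂ (-t) (θ₂ t ω₂) = ω₂ := by
    rw [theta2_comp hθ₂]; simp [hθ₂.2.1]
  have hsplit : ∀ s : ℝ, 0 ≤ s → pbImage θ₁ θ₂ Φ K (t + s) (θ₁ t ω₁) (θ₂ t ω₂) =
      Φ t ω₁ ω₂ '' pbImage θ₁ θ₂ Φ K s ω₁ ω₂ := by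
    intro s hs
    rw [pb_split hθ₁ hθ₂ hΦ ht hs K (θ₁ t ω₁) (θ₂ t ω₂), hbase1, hbase2]
  apply Set.Subset.antisymm
  · rintro - ⟨y, hy, rfl⟩
    obtain ⟨s, x, hst, hs0, hx, hxy⟩ := mem_omegaLimitFam_iff.1 hy
    refine mem_omegaLimitFam_iff.2 ⟨fun n => t + s n, fun n => Φ t ω₁ ω₂ (x n), ?_, ?_, ?_, ?_⟩
    · exact tendsto_atTop_add_const_left _ t hst
    · intro n; exact add_nonneg ht (hs0 n)
    · intro n
      rw [hsplit (s n) (hs0 n)]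
      exact Set.mem_image_of_mem _ (hx n)
    · exact ((hΦ.2.2.2 t ht ω₁ ω₂).tendsto y).comp hxy
  · intro z hz
    obtain ⟨s, x, hst, hs0, hx, hxz⟩ := mem_omegaLimitFam_iff.1 hz
    obtain ⟨N, hN⟩ := (hst.eventually_ge_atTop t).exists_forall_of_atTop
    set s' : ℕ → ℝ := fun n => s (n + N) - t with hs'
    have hs'0 : ∀ n, 0 ≤ s' n := fun n => by
      have := hN (n + N) (Nat.le_add_left N n); simp only [hs']; linarith
    have hs't : Tendsto s' atTop atTop := by
      have h1 : Tendsto (fun n => s (n + N)) atTop atTop := hst.comp (tendsto_add_atTop_nat N)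
      simpa [hs', sub_eq_add_neg] using tendsto_atTop_add_const_right atTop (-t) h1
    have hximg : ∀ n, x (n + N) ∈ Φ t ω₁ ω₂ '' pbImage θ₁ θ₂ Φ K (s' n) ω₁ ω₂ := by
      intro n
      have : t + s' n = s (n + N) := by simp only [hs']; ring
      rw [← hsplit (s' n) (hs'0 n), this]
      exact hx (n + N)
    choose w hw hwx using hximg
    -- w n ∈ pbImage K (s' n); extract the K-points
    have hwmem : ∀ n, ∃ z' ∈ K (θ₁ (-(s' n)) ω₁) (θ₂ (-(s' n)) ω₂),
        Φ (s' n) (θ₁ (-(s' n)) ω₁) (θ₂ (-(s' n)) ω₂) z' = w n := fun n => hw n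
    choose z' hz'mem hz'w using hwmem
    obtain ⟨φ, wlim, hφ, hwlim⟩ := hac ω₁ ω₂ K hK𝒟 s' z' hs't hz'mem
    have hwlim' : Tendsto (fun n => w (φ n)) atTop (𝓝 wlim) :=
      hwlim.congr fun n => hz'w (φ n)
    have hwlimA : wlim ∈ omegaLimitFam θ₁ θ₂ Φ K ω₁ ω₂ := by
      refine mem_omegaLimitFam_iff.2 ⟨fun n => s' (φ n), fun n => w (φ n), ?_, ?_, ?_, hwlim'⟩
      · exact hs't.comp hφ.tendsto_atTop
      · exact fun n => hs'0 (φ n)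
      · exact fun n => hw (φ n)
    refine ⟨wlim, hwlimA, ?_⟩
    have h1 : Tendsto (fun n => Φ t ω₁ ω₂ (w (φ n))) atTop (𝓝 (Φ t ω₁ ω₂ wlim)) :=
      ((hΦ.2.2.2 t ht ω₁ ω₂).tendsto wlim).comp hwlim'
    have h2 : Tendsto (fun n => Φ t ω₁ ω₂ (w (φ n))) atTop (𝓝 z) := by
      have : Tendsto (fun n => x (φ n + N)) atTop (𝓝 z) :=
        hxz.comp ((tendsto_add_atTop_nat N).comp hφ.tendsto_atTop)
      exact this.congr fun n => (hwx (φ n)).symm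
    exact tendsto_nhds_unique h1 h2
/-- The Ω-limit set of the absorbing set pullback-attracts every member of `𝒟`. -/
lemma omegaK_attracts (hθ₁ : IsParamDS₁ θ₁) (hθ₂ : IsParamDS₂ P θ₂)
    (hΦ : IsCocycle θ₁ θ₂ Φ) (hac : AsympCompact θ₁ θ₂ Φ 𝒟) (hK𝒟 : K ∈ 𝒟)
    (hKne : ∀ ω₁ ω₂, (K ω₁ ω₂).Nonempty) (hKabs : AbsorbsFam θ₁ θ₂ Φ 𝒟 K) :
    AttractsFam θ₁ θ₂ Φ 𝒟 (omegaLimitFam θ₁ θ₂ Φ K) := by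
  intro ω₁ ω₂ B hB ε hε
  set A := omegaLimitFam θ₁ θ₂ Φ K ω₁ ω₂ with hA
  have hAne : A.Nonempty := omegaK_nonempty hac hK𝒟 hKne ω₁ ω₂
  by_contra hcon
  push_neg at hcon
  have h : ∀ n : ℕ, ∃ t : ℝ, t ≥ (n : ℝ) ∧
      ∃ w ∈ pbImage θ₁ θ₂ Φ B t ω₁ ω₂, w ∉ thickening ε A := by
    intro n
    obtain ⟨t, ht, hnot⟩ := hcon (n : ℝ)
    rw [Set.not_subset] at hnot
    obtain ⟨w, hw, hw'⟩ := hnot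
    exact ⟨t, ht, w, hw, hw'⟩
  choose t ht w hw hwnot using h
  choose z hzmem hzw using hw
  obtain ⟨φ, y, hφ, hy⟩ := hac ω₁ ω₂ B hB t z
    (tendsto_atTop_mono ht tendsto_natCast_atTop_atTop) hzmem
  have hwlim : Tendsto (fun n => w (φ n)) atTop (𝓝 y) :=
    hy.congr fun n => hzw (φ n)
  have hyB : y ∈ omegaLimitFam θ₁ θ₂ Φ B ω₁ ω₂ := by
    refine mem_omegaLimitFam_iff.2 ⟨fun n => t (φ n), fun n => w (φ n), ?_, ?_, ?_, hwlim⟩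
    · exact (tendsto_atTop_mono ht tendsto_natCast_atTop_atTop).comp hφ.tendsto_atTop
    · intro n; exact le_trans (Nat.cast_nonneg _) (ht (φ n))
    · intro n
      have h1 := Set.mem_image_of_mem
        (Φ (t (φ n)) (θ₁ (-t (φ n)) ω₁) (θ₂ (-t (φ n)) ω₂)) (hzmem (φ n))
      rw [hzw (φ n)] at h1
      exact h1
  have hyA : y ∈ A := omega_subset_omegaK hθ₁ hθ₂ hΦ hKabs hB ω₁ ω₂ hyB
  have hge : ∀ n, ε ≤ infDist (w (φ n)) A := by
    intro n
    by_contra hlt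
    push_neg at hlt
    exact hwnot (φ n) ((mem_thickening_iff_infDist_lt hAne).2 hlt)
  have hlim : Tendsto (fun n => infDist (w (φ n)) A) atTop (𝓝 (infDist y A)) :=
    ((continuous_infDist_pt A).tendsto y).comp hwlim
  have hfin : ε ≤ infDist y A := ge_of_tendsto hlim (Filter.Eventually.of_forall hge)
  rw [infDist_zero_of_mem hyA] at hfin
  linarith
/-- An invariant family in `𝒟` is contained in any closed attracting family. -/
lemma invariant_subset_attracting (hθ₁ : IsParamDS₁ θ₁) (hθ₂ : IsParamDS₂ P θ₂)
    {C A' : Ω₁ → Ω₂ → Set X}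
    (hCinv : ∀ t : ℝ, 0 ≤ t → ∀ ω₁ ω₂, Φ t ω₁ ω₂ '' C ω₁ ω₂ = C (θ₁ t ω₁) (θ₂ t ω₂))
    (hC𝒟 : C ∈ 𝒟)
    (hatt : AttractsFam θ₁ θ₂ Φ 𝒟 A')
    (hcl : ∀ ω₁ ω₂, IsClosed (A' ω₁ ω₂)) (hne : ∀ ω₁ ω₂, (A' ω₁ ω₂).Nonempty) :
    ∀ ω₁ ω₂, C ω₁ ω₂ ⊆ A' ω₁ ω₂ := by
  intro ω₁ ω₂ y hy
  have hfix : ∀ t : ℝ, 0 ≤ t → C ω₁ ω₂ = pbImage θ₁ θ₂ Φ C t ω₁ ω₂ := by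
    intro t ht
    have h1 := hCinv t ht (θ₁ (-t) ω₁) (θ₂ (-t) ω₂)
    have h2 : θ₁ t (θ₁ (-t) ω₁) = ω₁ := by rw [theta1_comp hθ₁]; simp [hθ₁.1]
    have h3 : θ₂ t (θ₂ (-t) ω₂) = ω₂ := by rw [theta2_comp hθ₂]; simp [hθ₂.2.1]
    rw [h2, h3] at h1
    exact h1.symm
  have hdist : ∀ ε > (0:ℝ), infDist y (A' ω₁ ω₂) < ε := by
    intro ε hε
    obtain ⟨T, hT⟩ := hatt ω₁ ω₂ C hC𝒟 ε hε
    set t := max T 0 with htdef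
    have hyt : y ∈ pbImage θ₁ θ₂ Φ C t ω₁ ω₂ := (hfix t (le_max_right T 0)) ▸ hy
    have := hT t (le_max_left T 0) hyt
    exact (mem_thickening_iff_infDist_lt (hne ω₁ ω₂)).1 this
  have h0 : infDist y (A' ω₁ ω₂) = 0 := by
    by_contra hne0
    have hpos : 0 < infDist y (A' ω₁ ω₂) :=
      lt_of_le_of_ne infDist_nonneg (Ne.symm hne0)
    exact absurd (hdist _ hpos) (lt_irrefl _)
  exact ((hcl ω₁ ω₂).mem_iff_infDist_zero (hne ω₁ ω₂)).2 h0

/-- The Ω-limit set of the absorbing set belongs to `𝒟`. -/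
lemma omegaK_mem_D (h𝒟 : NbhdClosed 𝒟) (hac : AsympCompact θ₁ θ₂ Φ 𝒟) (hK𝒟 : K ∈ 𝒟)
    (hKcl : ∀ ω₁ ω₂, (K ω₁ ω₂).Nonempty ∧ IsClosed (K ω₁ ω₂))
    (hKabs : AbsorbsFam θ₁ θ₂ Φ 𝒟 K) :
    omegaLimitFam θ₁ θ₂ Φ K ∈ 𝒟 := by
  obtain ⟨ε, hε, hcl⟩ := h𝒟 K hK𝒟
  refine hcl _ fun ω₁ ω₂ => ⟨omegaK_nonempty hac hK𝒟 (fun ω₁ ω₂ => (hKcl ω₁ ω₂).1) ω₁ ω₂, ?_⟩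
  exact (omegaK_subset_K hK𝒟 hKcl hKabs ω₁ ω₂).trans (self_subset_thickening hε _)
lemma real_le_of_forall_pos_le_add {a b : ℝ} (h : ∀ ε > (0:ℝ), a ≤ b + ε) : a ≤ b := by
  by_contra hab
  push_neg at hab
  have := h ((a - b) / 2) (by linarith)
  linarith

/-- auxiliary constant for the selection construction -/
noncomputable def selC (m k : ℕ) : ℝ := (((m : ℝ) + 1) * 2 ^ k)⁻¹

lemma selC_pos (m k : ℕ) : 0 < selC m k := by
  have : (0:ℝ) < ((m : ℝ) + 1) * 2 ^ k := by positivity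
  exact inv_pos.2 this

lemma selC_le (m k : ℕ) : selC m k ≤ (1 / ((m : ℝ) + 1)) * (1 / 2) ^ k := by
  apply le_of_eq
  rw [selC, mul_inv, div_pow, one_pow, one_div, one_div]

lemma selC_zero (m : ℕ) : selC m 0 = 1 / ((m : ℝ) + 1) := by
  rw [selC]; simp

lemma selC_tendsto (m : ℕ) : Tendsto (fun k : ℕ => selC m k) atTop (𝓝 0) := by
  have hhalf : Tendsto (fun k : ℕ => (1 / ((m : ℝ) + 1)) * (1 / 2) ^ k) atTop (𝓝 0) := by
    have := (tendsto_pow_atTop_nhds_zero_of_lt_one (by norm_num : (0:ℝ) ≤ 1 / 2)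
      (by norm_num : (1:ℝ) / 2 < 1)).const_mul (1 / ((m : ℝ) + 1))
    rwa [mul_zero] at this
  exact squeeze_zero (fun k => (selC_pos m k).le) (fun k => selC_le m k) hhalf

section Selection

variable [TopologicalSpace.SeparableSpace X] [CompleteSpace X]

/-- the one-step predicate of the selection construction -/
def selQ (u : ℕ → X) (D' : ℕ → Ω₂ → ℝ) (a b : ℝ) (prev : ℕ) (ω : Ω₂) (j : ℕ) : Prop :=
  dist (u j) (u prev) < D' prev ω + a ∧ D' j ω < b

open Classical in
/-- the one-step map of the selection construction -/
noncomputable def selStep (u : ℕ → X) (D' : ℕ → Ω₂ → ℝ) (a b : ℝ) (prev : ℕ) (ω : Ω₂) : ℕ :=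
  if h : ∃ j, selQ u D' a b prev ω j then Nat.find h else 0

/-- the recursively defined index sequence of the selection construction -/
noncomputable def selSeq (u : ℕ → X) (D' : ℕ → Ω₂ → ℝ) (m i : ℕ) : ℕ → Ω₂ → ℕ
  | 0 => fun _ => i
  | (k + 1) => fun ω => selStep u D' (selC m k) (selC m (k + 1)) (selSeq u D' m i k ω) ω

lemma selQ_measurableSet {u : ℕ → X} {D' : ℕ → Ω₂ → ℝ} (hD' : ∀ j, Measurable (D' j))
    (a b : ℝ) (prev j : ℕ) : MeasurableSet {ω | selQ u D' a b prev ω j} := by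
  refine MeasurableSet.inter ?_ ?_
  · exact measurableSet_lt measurable_const ((hD' prev).add measurable_const)
  · exact measurableSet_lt (hD' j) measurable_const

lemma selStep_measurable {u : ℕ → X} {D' : ℕ → Ω₂ → ℝ} (hD' : ∀ j, Measurable (D' j))
    (a b : ℝ) (prev : ℕ) : Measurable (fun ω => selStep u D' a b prev ω) := by
  classical
  refine measurable_to_countable' fun j => ?_
  have hkey : (fun ω => selStep u D' a b prev ω) ⁻¹' {j} =
      ({ω | selQ u D' a b prev ω j} ∩ ⋂ j' ∈ Finset.range j, {ω | selQ u D' a b prev ω j'}ᶜ) ∪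
        (if j = 0 then ⋂ j' : ℕ, {ω | selQ u D' a b prev ω j'}ᶜ else ∅) := by
    ext ω
    simp only [Set.mem_preimage, Set.mem_singleton_iff, selStep]
    constructor
    · intro hω
      by_cases hex : ∃ j', selQ u D' a b prev ω j'
      · rw [dif_pos hex, Nat.find_eq_iff hex] at hω
        left
        refine ⟨hω.1, ?_⟩
        simp only [Set.mem_iInter, Finset.mem_range, Set.mem_compl_iff, Set.mem_setOf_eq]
        exact fun j' hj' => hω.2 j' hj'
      · rw [dif_neg hex] at hω
        right
        rw [if_pos hω.symm]
        simp only [Set.mem_iInter, Set.mem_compl_iff, Set.mem_setOf_eq]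
        exact fun j' hQ => hex ⟨j', hQ⟩
    · intro hω
      rcases hω with hω | hω
      · simp only [Set.mem_inter_iff, Set.mem_setOf_eq, Set.mem_iInter, Finset.mem_range,
          Set.mem_compl_iff] at hω
        have hex : ∃ j', selQ u D' a b prev ω j' := ⟨j, hω.1⟩
        rw [dif_pos hex, Nat.find_eq_iff hex]
        exact ⟨hω.1, fun j' hj' => hω.2 j' hj'⟩
      · by_cases hj : j = 0
        · rw [if_pos hj] at hω
          simp only [Set.mem_iInter, Set.mem_compl_iff, Set.mem_setOf_eq] at hω
          have hex : ¬ ∃ j', selQ u D' a b prev ω j' := fun ⟨j', hQ⟩ => hω j' hQ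
          rw [dif_neg hex, hj]
        · rw [if_neg hj] at hω
          exact absurd hω (Set.notMem_empty ω)
  rw [hkey]
  refine MeasurableSet.union ?_ ?_
  · exact (selQ_measurableSet hD' a b prev j).inter
      (MeasurableSet.biInter (Set.to_countable _)
        fun j' _ => (selQ_measurableSet hD' a b prev j').compl)
  · split_ifs
    · exact MeasurableSet.iInter fun j' => (selQ_measurableSet hD' a b prev j').compl
    · exact MeasurableSet.empty

lemma selStep_comp_measurable {u : ℕ → X} {D' : ℕ → Ω₂ → ℝ} (hD' : ∀ j, Measurable (D' j))
    (a b : ℝ) {f : Ω₂ → ℕ} (hf : Measurable f) :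
    Measurable (fun ω => selStep u D' a b (f ω) ω) := by
  refine measurable_to_countable' fun j => ?_
  have : (fun ω => selStep u D' a b (f ω) ω) ⁻¹' {j} =
      ⋃ p : ℕ, (f ⁻¹' {p} ∩ (fun ω => selStep u D' a b p ω) ⁻¹' {j}) := by
    ext ω
    simp only [Set.mem_preimage, Set.mem_singleton_iff, Set.mem_iUnion, Set.mem_inter_iff]
    constructor
    · intro hω; exact ⟨f ω, rfl, hω⟩
    · rintro ⟨p, rfl, hω⟩; exact hω
  rw [this]
  exact MeasurableSet.iUnion fun p =>
    (hf (MeasurableSet.singleton p)).inter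
      (selStep_measurable hD' a b p (MeasurableSet.singleton j))

lemma selSeq_measurable {u : ℕ → X} {D' : ℕ → Ω₂ → ℝ} (hD' : ∀ j, Measurable (D' j))
    (m i k : ℕ) : Measurable (fun ω => selSeq u D' m i k ω) := by
  induction k with
  | zero => exact measurable_const
  | succ k ih => exact selStep_comp_measurable hD' _ _ ih
lemma selStep_spec {u : ℕ → X} {D' : ℕ → Ω₂ → ℝ} {a b : ℝ} {prev : ℕ} {ω : Ω₂}
    (hex : ∃ j, selQ u D' a b prev ω j) : selQ u D' a b prev ω (selStep u D' a b prev ω) := by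
  classical
  rw [selStep, dif_pos hex]
  exact Nat.find_spec hex

/-- The infimum distance from a point to the image of a measurable random closed set under a
Carathéodory map is a.e. measurable. -/
lemma aemeasurable_infDist_image {P : Measure Ω₂} (M : Ω₂ → Set X) (F : Ω₂ → X → X)
    (hMne : ∀ ω, (M ω).Nonempty) (hMcl : ∀ ω, IsClosed (M ω))
    (hMd : ∀ z : X, AEMeasurable (fun ω => infDist z (M ω)) P)
    (hF : Measurable (fun p : Ω₂ × X => F p.1 p.2)) (hFc : ∀ ω, Continuous (F ω)) (x : X) :
    AEMeasurable (fun ω => infDist x (F ω '' M ω)) P := by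
  classical
  rcases isEmpty_or_nonempty Ω₂ with hE | hE
  · exact (measurable_of_empty _).aemeasurable
  have hX : Nonempty X := ⟨(hMne hE.some).some⟩
  obtain ⟨u, hu⟩ := TopologicalSpace.exists_dense_seq X
  -- measurable versions of the distance functions
  set D' : ℕ → Ω₂ → ℝ := fun j => (hMd (u j)).mk _ with hD'def
  have hD'm : ∀ j, Measurable (D' j) := fun j => (hMd (u j)).measurable_mk
  have hGae : ∀ᵐ ω ∂P, ∀ j, D' j ω = infDist (u j) (M ω) :=
    ae_all_iff.2 fun j => ((hMd (u j)).ae_eq_mk).symm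
  -- the approximate selections
  set v : ℕ × ℕ → Ω₂ → X := fun p ω =>
    if h : ∃ y, Tendsto (fun k => u (selSeq u D' p.2 p.1 k ω)) atTop (𝓝 y) then h.choose
    else hX.some with hvdef
  -- analysis on the good set
  have hgood : ∀ ω, (∀ j, D' j ω = infDist (u j) (M ω)) → ∀ p : ℕ × ℕ,
      (Tendsto (fun k => u (selSeq u D' p.2 p.1 k ω)) atTop (𝓝 (v p ω)) ∧ v p ω ∈ M ω ∧
        dist (u p.1) (v p ω) ≤ (D' p.1 ω + 2 / ((p.2 : ℝ) + 1)) / (1 - 1 / 2)) := by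
    intro ω hω p
    obtain ⟨i, m⟩ := p
    simp only
    have hD'nonneg : ∀ j, 0 ≤ D' j ω := fun j => (hω j) ▸ infDist_nonneg
    -- at every step, a suitable index exists
    have hex : ∀ k prev, ∃ j, selQ u D' (selC m k) (selC m (k + 1)) prev ω j := by
      intro k prev
      obtain ⟨z, hzM, hzd⟩ := (infDist_lt_iff (hMne ω)).1
        (lt_add_of_pos_right (infDist (u prev) (M ω)) (half_pos (selC_pos m k)))
      obtain ⟨j, hj⟩ := hu.exists_dist_lt z
        (lt_min (half_pos (selC_pos m k)) (selC_pos m (k + 1)))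
      refine ⟨j, ?_, ?_⟩
      · rw [hω prev]
        have h1 : dist (u j) (u prev) ≤ dist (u j) z + dist z (u prev) := dist_triangle _ _ _
        have h2 : dist (u j) z < selC m k / 2 := by
          rw [dist_comm]; exact lt_of_lt_of_le hj (min_le_left _ _)
        have h3 : dist z (u prev) < infDist (u prev) (M ω) + selC m k / 2 := by
          rw [dist_comm]; exact hzd
        linarith
      · rw [hω j]
        calc infDist (u j) (M ω) ≤ dist (u j) z := infDist_le_dist_of_mem hzM
          _ = dist z (u j) := dist_comm _ _
          _ < selC m (k + 1) := lt_of_lt_of_le hj (min_le_right _ _)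
    have hfind : ∀ k, selQ u D' (selC m k) (selC m (k + 1)) (selSeq u D' m i k ω) ω
        (selSeq u D' m i (k + 1) ω) := by
      intro k
      exact selStep_spec (hex k (selSeq u D' m i k ω))
    -- geometric bound on consecutive distances
    set C : ℝ := D' i ω + 2 / ((m : ℝ) + 1) with hCdef
    have hgeom : ∀ k, dist (u (selSeq u D' m i k ω)) (u (selSeq u D' m i (k + 1) ω)) ≤
        C * (1 / 2) ^ k := by
      intro k
      have h1 : dist (u (selSeq u D' m i k ω)) (u (selSeq u D' m i (k + 1) ω)) <
          D' (selSeq u D' m i k ω) ω + selC m k := by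
        have := (hfind k).1; rwa [dist_comm] at this
      cases k with
      | zero =>
        rw [selC_zero m] at h1
        have hm1 : (0:ℝ) < (m : ℝ) + 1 := by positivity
        have h12 : (1:ℝ) / ((m : ℝ) + 1) ≤ 2 / ((m : ℝ) + 1) := by gcongr; norm_num
        have he0 : selSeq u D' m i 0 ω = i := rfl
        rw [he0] at h1 ⊢
        simp only [pow_zero, mul_one, hCdef]
        linarith
      | succ k =>
        have hprev : D' (selSeq u D' m i (k + 1) ω) ω < selC m (k + 1) := (hfind k).2
        have h3 : 2 * selC m (k + 1) ≤ C * (1 / 2) ^ (k + 1) := by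
          have hle := selC_le m (k + 1)
          have hC2 : 2 / ((m : ℝ) + 1) ≤ C := by rw [hCdef]; linarith [hD'nonneg i]
          calc 2 * selC m (k + 1) ≤ 2 * ((1 / ((m : ℝ) + 1)) * (1 / 2) ^ (k + 1)) := by
                exact mul_le_mul_of_nonneg_left hle (by norm_num)
            _ = (2 / ((m : ℝ) + 1)) * (1 / 2) ^ (k + 1) := by ring
            _ ≤ C * (1 / 2) ^ (k + 1) :=
                mul_le_mul_of_nonneg_right hC2 (by positivity)
        linarith
    have hcauchy : CauchySeq (fun k => u (selSeq u D' m i k ω)) :=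
      cauchySeq_of_le_geometric (1 / 2) C (by norm_num) hgeom
    obtain ⟨y, hy⟩ := cauchySeq_tendsto_of_complete hcauchy
    have hvex : ∃ y', Tendsto (fun k => u (selSeq u D' m i k ω)) atTop (𝓝 y') := ⟨y, hy⟩
    have htend : Tendsto (fun k => u (selSeq u D' m i k ω)) atTop (𝓝 (v (i, m) ω)) := by
      rw [hvdef]
      simp only
      rw [dif_pos hvex]
      exact hvex.choose_spec
    refine ⟨htend, ?_, ?_⟩
    · -- membership in M ω
      have hlim : Tendsto (fun k => infDist (u (selSeq u D' m i k ω)) (M ω)) atTop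
          (𝓝 (infDist (v (i, m) ω) (M ω))) :=
        ((continuous_infDist_pt (M ω)).tendsto _).comp htend
      have hle : ∀ k, infDist (u (selSeq u D' m i (k + 1) ω)) (M ω) ≤ selC m (k + 1) := by
        intro k
        rw [← hω (selSeq u D' m i (k + 1) ω)]
        exact ((hfind k).2).le
      have hinf0 : Tendsto (fun k : ℕ => infDist (u (selSeq u D' m i (k + 1) ω)) (M ω)) atTop
          (𝓝 0) :=
        squeeze_zero (fun k => infDist_nonneg) hle ((selC_tendsto m).comp
          (tendsto_add_atTop_nat 1))
      have hlim' : Tendsto (fun k : ℕ => infDist (u (selSeq u D' m i (k + 1) ω)) (M ω)) atTop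
          (𝓝 (infDist (v (i, m) ω) (M ω))) := hlim.comp (tendsto_add_atTop_nat 1)
      have h0 : infDist (v (i, m) ω) (M ω) = 0 := tendsto_nhds_unique hlim' hinf0
      exact ((hMcl ω).mem_iff_infDist_zero (hMne ω)).2 h0
    · -- distance bound
      have := dist_le_of_le_geometric_of_tendsto₀ (1 / 2) C (by norm_num) hgeom htend
      exact this
  -- the candidate measurable function
  have hvmeas : ∀ p : ℕ × ℕ, AEMeasurable (v p) P := by
    intro p
    refine aemeasurable_of_tendsto_metrizable_ae'
      (f := fun k ω => u (selSeq u D' p.2 p.1 k ω))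
      (fun k => (measurable_from_top.comp (selSeq_measurable hD'm p.2 p.1 k)).aemeasurable) ?_
    filter_upwards [hGae] with ω hω
    exact (hgood ω hω p).1
  have hterm : ∀ p : ℕ × ℕ, AEMeasurable (fun ω => dist x (F ω (v p ω))) P := by
    intro p
    have h1 : AEMeasurable (fun ω => (ω, v p ω)) P := aemeasurable_id.prodMk (hvmeas p)
    have h2 : AEMeasurable (fun ω => F ω (v p ω)) P := hF.comp_aemeasurable h1
    exact (continuous_const.dist continuous_id).measurable.comp_aemeasurable h2
  refine AEMeasurable.congr (AEMeasurable.iInf hterm) ?_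
  -- a.e. identity
  filter_upwards [hGae] with ω hω
  have hbdd : BddBelow (Set.range fun p : ℕ × ℕ => dist x (F ω (v p ω))) :=
    ⟨0, by rintro r ⟨p, rfl⟩; exact dist_nonneg⟩
  apply le_antisymm
  · -- ⨅ ≤ infDist
    refine real_le_of_forall_pos_le_add fun ε hε => ?_
    have himne : (F ω '' M ω).Nonempty := (hMne ω).image _
    obtain ⟨w, ⟨z, hzM, rfl⟩, hwd⟩ := (infDist_lt_iff himne).1
      (lt_add_of_pos_right (infDist x (F ω '' M ω)) (half_pos hε))
    obtain ⟨δ, hδpos, hδ⟩ := Metric.continuous_iff.1 (hFc ω) z (ε / 2) (half_pos hε)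
    -- density of the selections
    have hdense : ∃ p : ℕ × ℕ, dist (v p ω) z < δ := by
      obtain ⟨i, hi⟩ := hu.exists_dist_lt z (show (0:ℝ) < δ / 8 by linarith)
      obtain ⟨m, hm⟩ := exists_nat_gt (8 / δ)
      have hm1 : (0:ℝ) < (m : ℝ) + 1 := by positivity
      have hmδ : 2 / ((m : ℝ) + 1) < δ / 4 := by
        rw [div_lt_iff₀ hm1]
        rw [div_lt_iff₀ (show (0:ℝ) < δ by linarith)] at hm
        nlinarith
      have hDi : D' i ω ≤ dist (u i) z := by
        rw [hω i]
        exact infDist_le_dist_of_mem hzM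
      have hdiz : dist (u i) z < δ / 8 := by rwa [dist_comm] at hi
      have hbound : dist (u i) (v (i, m) ω) ≤
          (D' i ω + 2 / ((m : ℝ) + 1)) / (1 - 1 / 2) := (hgood ω hω (i, m)).2.2
      have htri : dist (v (i, m) ω) z ≤ dist (u i) (v (i, m) ω) + dist (u i) z := by
        rw [dist_comm (u i) (v (i, m) ω)]
        exact dist_triangle _ _ _
      refine ⟨(i, m), ?_⟩
      have hb2 : (D' i ω + 2 / ((m : ℝ) + 1)) / (1 - 1 / 2) =
          2 * D' i ω + 2 * (2 / ((m : ℝ) + 1)) := by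
        norm_num
        ring
      rw [hb2] at hbound
      have h1 : D' i ω < δ / 8 := lt_of_le_of_lt hDi hdiz
      calc dist (v (i, m) ω) z ≤ dist (u i) (v (i, m) ω) + dist (u i) z := htri
        _ ≤ 2 * D' i ω + 2 * (2 / ((m : ℝ) + 1)) + δ / 8 := by linarith
        _ < 2 * (δ / 8) + 2 * (δ / 4) + δ / 8 := by nlinarith
        _ < δ := by linarith
    obtain ⟨p, hp⟩ := hdense
    have hFp : dist (F ω (v p ω)) (F ω z) < ε / 2 := hδ (v p ω) hp
    have hfin : dist x (F ω (v p ω)) < infDist x (F ω '' M ω) + ε := by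
      calc dist x (F ω (v p ω)) ≤ dist x (F ω z) + dist (F ω z) (F ω (v p ω)) :=
            dist_triangle _ _ _
        _ < (infDist x (F ω '' M ω) + ε / 2) + ε / 2 := by
            rw [dist_comm (F ω z)]
            exact add_lt_add hwd hFp
        _ = infDist x (F ω '' M ω) + ε := by ring
    exact le_trans (ciInf_le hbdd p) hfin.le
  · -- infDist ≤ ⨅
    refine le_ciInf fun p => ?_
    exact infDist_le_dist_of_mem (Set.mem_image_of_mem _ (hgood ω hω p).2.1)
/-- Measurability of the Ω-limit set of the absorbing set. -/
lemma omegaK_measurableFam {P : Measure Ω₂} (hθ₁ : IsParamDS₁ θ₁) (hθ₂ : IsParamDS₂ P θ₂)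
    (hΦ : IsCocycle θ₁ θ₂ Φ) (hac : AsympCompact θ₁ θ₂ Φ 𝒟) (hK𝒟 : K ∈ 𝒟)
    (hKcl : ∀ ω₁ ω₂, (K ω₁ ω₂).Nonempty ∧ IsClosed (K ω₁ ω₂))
    (hKm : MeasurableFam P K) (hKabs : AbsorbsFam θ₁ θ₂ Φ 𝒟 K) :
    MeasurableFam P (omegaLimitFam θ₁ θ₂ Φ K) := by
  intro x ω₁
  set A := omegaLimitFam θ₁ θ₂ Φ K with hAdef
  have hKne : ∀ ω₁ ω₂, (K ω₁ ω₂).Nonempty := fun ω₁ ω₂ => (hKcl ω₁ ω₂).1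
  have hAne : ∀ ω₂, (A ω₁ ω₂).Nonempty := fun ω₂ => omegaK_nonempty hac hK𝒟 hKne ω₁ ω₂
  have hAatt := omegaK_attracts hθ₁ hθ₂ hΦ hac hK𝒟 hKne hKabs
  -- the approximating functions
  set g : ℕ → Ω₂ → ℝ := fun n ω₂ => infDist x (pbImage θ₁ θ₂ Φ K (n : ℝ) ω₁ ω₂) with hgdef
  -- A is contained in each pullback image
  have hsub : ∀ (n : ℕ) ω₂, A ω₁ ω₂ ⊆ pbImage θ₁ θ₂ Φ K (n : ℝ) ω₁ ω₂ := by
    intro n ω₂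
    have h1 := omegaK_invariant hθ₁ hθ₂ hΦ hac hK𝒟 (n : ℝ) (Nat.cast_nonneg n)
      (θ₁ (-(n : ℝ)) ω₁) (θ₂ (-(n : ℝ)) ω₂)
    have h2 : θ₁ (n : ℝ) (θ₁ (-(n : ℝ)) ω₁) = ω₁ := by
      rw [theta1_comp hθ₁]; simp [hθ₁.1]
    have h3 : θ₂ (n : ℝ) (θ₂ (-(n : ℝ)) ω₂) = ω₂ := by
      rw [theta2_comp hθ₂]; simp [hθ₂.2.1]
    rw [h2, h3] at h1
    rw [hAdef, ← h1]
    exact Set.image_mono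
      (omegaK_subset_K hK𝒟 hKcl hKabs (θ₁ (-(n : ℝ)) ω₁) (θ₂ (-(n : ℝ)) ω₂))
  -- pointwise convergence of the approximations
  have hlim : ∀ ω₂, Tendsto (fun n => g n ω₂) atTop (𝓝 (infDist x (A ω₁ ω₂))) := by
    intro ω₂
    rw [Metric.tendsto_atTop]
    intro ε hε
    obtain ⟨T, hT⟩ := hAatt ω₁ ω₂ K hK𝒟 (ε / 2) (half_pos hε)
    obtain ⟨N, hN⟩ := exists_nat_ge T
    refine ⟨N, fun n hn => ?_⟩
    have hTn : T ≤ (n : ℝ) := le_trans hN (Nat.cast_le.2 hn)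
    have hthick := hT (n : ℝ) hTn
    have hle1 : g n ω₂ ≤ infDist x (A ω₁ ω₂) :=
      infDist_le_infDist_of_subset (hsub n ω₂) (hAne ω₂)
    have hle2 : infDist x (A ω₁ ω₂) ≤ g n ω₂ + ε / 2 := by
      by_contra hcon
      push_neg at hcon
      have hpbne : (pbImage θ₁ θ₂ Φ K (n : ℝ) ω₁ ω₂).Nonempty :=
        ((hAne ω₂).mono (hsub n ω₂))
      obtain ⟨y, hymem, hyd⟩ := (infDist_lt_iff hpbne).1
        (show g n ω₂ < infDist x (A ω₁ ω₂) - ε / 2 by linarith)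
      obtain ⟨a, haA, hya⟩ := Metric.mem_thickening_iff.1 (hthick hymem)
      have : infDist x (A ω₁ ω₂) ≤ dist x a := infDist_le_dist_of_mem haA
      have htri : dist x a ≤ dist x y + dist y a := dist_triangle _ _ _
      linarith
    rw [Real.dist_eq, abs_lt]
    constructor <;> linarith
  -- each approximation is a.e. measurable
  have hgmeas : ∀ n : ℕ, AEMeasurable (g n) P := by
    intro n
    set ν₁ := θ₁ (-(n : ℝ)) ω₁ with hν₁
    have hFmeas : Measurable (fun p : Ω₂ × X => Φ (n : ℝ) ν₁ p.1 p.2) := by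
      have hmap : Measurable (fun p : Ω₂ × X =>
          ((⟨(n : ℝ), Set.mem_Ici.2 (Nat.cast_nonneg n)⟩ : Ici (0:ℝ)), p)) :=
        measurable_const.prodMk measurable_id
      exact (hΦ.1 ν₁).comp hmap
    have hmain := aemeasurable_infDist_image (P := P) (fun ω' => K ν₁ ω')
      (fun ω' z => Φ (n : ℝ) ν₁ ω' z) (fun ω' => (hKcl ν₁ ω').1) (fun ω' => (hKcl ν₁ ω').2)
      (fun z => (hKm z ν₁).aemeasurable) hFmeas
      (fun ω' => hΦ.2.2.2 (n : ℝ) (Nat.cast_nonneg n) ν₁ ω') x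
    have hqmp : MeasureTheory.Measure.QuasiMeasurePreserving (θ₂ (-(n : ℝ))) P P :=
      (hθ₂.2.2.2 (-(n : ℝ))).quasiMeasurePreserving
    exact hmain.comp_quasiMeasurePreserving hqmp
  -- conclude
  have : AEMeasurable (fun ω₂ => infDist x (A ω₁ ω₂)) P :=
    aemeasurable_of_tendsto_metrizable_ae' hgmeas
      (Filter.Eventually.of_forall fun ω₂ => hlim ω₂)
  exact this.nullMeasurable
end Selection
end Aux1
/-- Proposition 2.1, existence part. If `𝒟` is neighborhood closed, `Φ` is
`𝒟`-pullback asymptotically compact and has a closed measurable `𝒟`-pullback absorbing set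
`K ∈ 𝒟`, then `Φ` has a unique `𝒟`-pullback attractor `A ∈ 𝒟`, given by
`A(ω₁,ω₂) = Ω(K,ω₁,ω₂) = ⋃_{B ∈ 𝒟} Ω(B,ω₁,ω₂)`. -/
theorem pullback_attractor_existence_uniqueness
    [CompleteSpace X] [TopologicalSpace.SeparableSpace X] [Nonempty Ω₁]
    (θ₁ : ℝ → Ω₁ → Ω₁) (θ₂ : ℝ → Ω₂ → Ω₂)
    (P : Measure Ω₂) [IsProbabilityMeasure P]
    (Φ : ℝ → Ω₁ → Ω₂ → X → X)
    (𝒟 : Set (Ω₁ → Ω₂ → Set X))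
    (hθ₁ : IsParamDS₁ θ₁) (hθ₂ : IsParamDS₂ P θ₂)
    (hΦ : IsCocycle θ₁ θ₂ Φ)
    (h𝒟ne : ∀ D ∈ 𝒟, ∀ ω₁ ω₂, (D ω₁ ω₂).Nonempty)
    (h𝒟 : NbhdClosed 𝒟)
    (hac : AsympCompact θ₁ θ₂ Φ 𝒟)
    (K : Ω₁ → Ω₂ → Set X) (hK𝒟 : K ∈ 𝒟)
    (hKcl : ∀ ω₁ ω₂, (K ω₁ ω₂).Nonempty ∧ IsClosed (K ω₁ ω₂))
    (hKm : MeasurableFam P K)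
    (hKabs : AbsorbsFam θ₁ θ₂ Φ 𝒟 K) :
    ∃ A : Ω₁ → Ω₂ → Set X,
      IsPullbackAttractor P θ₁ θ₂ Φ 𝒟 A ∧
      (∀ A' : Ω₁ → Ω₂ → Set X, IsPullbackAttractor P θ₁ θ₂ Φ 𝒟 A' →
        ∀ ω₁ ω₂, A' ω₁ ω₂ = A ω₁ ω₂) ∧
      (∀ ω₁ ω₂, A ω₁ ω₂ = omegaLimitFam θ₁ θ₂ Φ K ω₁ ω₂) ∧
      (∀ ω₁ ω₂, A ω₁ ω₂ = ⋃ B ∈ 𝒟, omegaLimitFam θ₁ θ₂ Φ B ω₁ ω₂) := by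
  classical
  have hKne : ∀ ω₁ ω₂, (K ω₁ ω₂).Nonempty := fun ω₁ ω₂ => (hKcl ω₁ ω₂).1
  set A : Ω₁ → Ω₂ → Set X := omegaLimitFam θ₁ θ₂ Φ K with hAdef
  have hAatt : AttractsFam θ₁ θ₂ Φ 𝒟 A := omegaK_attracts hθ₁ hθ₂ hΦ hac hK𝒟 hKne hKabs
  have hAinv : ∀ t : ℝ, 0 ≤ t → ∀ ω₁ ω₂, Φ t ω₁ ω₂ '' A ω₁ ω₂ = A (θ₁ t ω₁) (θ₂ t ω₂) :=
    omegaK_invariant hθ₁ hθ₂ hΦ hac hK𝒟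
  have hAmem : A ∈ 𝒟 := omegaK_mem_D h𝒟 hac hK𝒟 hKcl hKabs
  have hAcpt : ∀ ω₁ ω₂, IsCompact (A ω₁ ω₂) := omegaK_isCompact hac hK𝒟
  have hAne : ∀ ω₁ ω₂, (A ω₁ ω₂).Nonempty := omegaK_nonempty hac hK𝒟 hKne
  have hAattr : IsPullbackAttractor P θ₁ θ₂ Φ 𝒟 A :=
    ⟨hAmem, omegaK_measurableFam hθ₁ hθ₂ hΦ hac hK𝒟 hKcl hKm hKabs, hAcpt, hAinv, hAatt⟩
  refine ⟨A, hAattr, ?_, fun ω₁ ω₂ => rfl, ?_⟩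
  · -- uniqueness
    intro A' hA' ω₁ ω₂
    apply Set.Subset.antisymm
    · exact invariant_subset_attracting hθ₁ hθ₂ hA'.2.2.2.1 hA'.1 hAatt
        (fun ω₁ ω₂ => omegaLimitFam_isClosed ω₁ ω₂) hAne ω₁ ω₂
    · exact invariant_subset_attracting hθ₁ hθ₂ hAinv hAmem hA'.2.2.2.2
        (fun ω₁ ω₂ => (hA'.2.2.1 ω₁ ω₂).isClosed) (h𝒟ne A' hA'.1) ω₁ ω₂
  · -- union formula
    intro ω₁ ω₂
    apply Set.Subset.antisymm
    · exact Set.subset_biUnion_of_mem (u := fun B => omegaLimitFam θ₁ θ₂ Φ B ω₁ ω₂) hK𝒟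
    · exact Set.iUnion₂_subset fun B hB => omega_subset_omegaK hθ₁ hθ₂ hΦ hKabs hB ω₁ ω₂

end RDS
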